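/- Let G be a group, δ > 0, and f : G → ℂ satisfy |f(x*y) − f(x)·f(y)| ≤ δ for all x, y ∈ G. If f is bounded, then |f(x)| ≤ (1 + √(1+4δ))/2 for all x ∈ G. -/

import Mathlib

theorem stmt_9 (G : Type*) [Group G] (δ : ℝ) (hδ : 0 < δ) (f : G → ℂ)
    (h : ∀ x y : G, ‖f (x * y) - f x * f y‖ ≤ δ)
    (hf : ∃ M : ℝ, ∀ x : G, ‖f x‖ ≤ M) :
    ∀ x : G, ‖f x‖ ≤ (1 + Real.sqrt (1 + 4 * δ)) / 2 := by
  set S : Set ℝ := Set.range (fun x => ‖f x‖) with hS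
  have hne : S.Nonempty := ⟨‖f 1‖, ⟨1, rfl⟩⟩
  obtain ⟨B, hB⟩ := hf
  have hbdd : BddAbove S := ⟨B, by rintro s ⟨x, rfl⟩; exact hB x⟩
  set M : ℝ := sSup S with hM
  have hle : ∀ x : G, ‖f x‖ ≤ M := fun x =>
    le_csSup hbdd ⟨x, rfl⟩
  have hM0 : 0 ≤ M := le_trans (norm_nonneg _) (hle 1)
  -- M^2 ≤ M + δ
  have hsq : ∀ x : G, (‖f x‖)^2 ≤ M + δ := by
    intro x
    have h1 : ‖f x * f x‖ - ‖f (x * x)‖ ≤ δ := by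
      have := h x x
      calc ‖f x * f x‖ - ‖f (x*x)‖
          ≤ |‖f x * f x‖ - ‖f (x*x)‖| := le_abs_self _
        _ ≤ ‖f x * f x - f (x*x)‖ := abs_norm_sub_norm_le _ _
        _ = ‖f (x*x) - f x * f x‖ := by rw [← norm_neg]; ring_nf
        _ ≤ δ := this
    have : ‖f x * f x‖ ≤ M + δ := by
      have := hle (x * x); linarith
    rwa [norm_mul, ← sq] at this
  have hMsq : M^2 ≤ M + δ := by
    have hMs : M ≤ Real.sqrt (M + δ) := by
      apply csSup_le hne
      rintro s ⟨x, rfl⟩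
      have := hsq x
      have h0 : (0:ℝ) ≤ ‖f x‖ := norm_nonneg _
      nlinarith [Real.sq_sqrt (by linarith : (0:ℝ) ≤ M + δ),
        Real.sqrt_nonneg (M + δ), Real.sqrt_le_sqrt this]
    nlinarith [Real.sq_sqrt (by linarith : (0:ℝ) ≤ M + δ), Real.sqrt_nonneg (M+δ)]
  have hroot : M ≤ (1 + Real.sqrt (1 + 4 * δ)) / 2 := by
    have h1 : (2*M - 1)^2 ≤ 1 + 4*δ := by nlinarith
    have h2 : 2*M - 1 ≤ Real.sqrt (1 + 4*δ) := by
      calc 2*M - 1 ≤ |2*M - 1| := le_abs_self _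
        _ = Real.sqrt ((2*M-1)^2) := (Real.sqrt_sq_eq_abs _).symm
        _ ≤ Real.sqrt (1 + 4*δ) := Real.sqrt_le_sqrt h1
    linarith
  exact fun x => le_trans (hle x) hroot
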